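/- Let n ≥ 3, k = 2, and ρ(x) = sqrt(x₁² + x₂² + ε(x₃² + ⋯ + x_n²)). Then for every ε with 1/n + sqrt(2(n−2)(n−1))/(n(n−2)) ≤ ε ≤ 1, one has Δ²ρ(x) ≤ 0 for all x ≠ 0. -/

import Mathlib

open scoped BigOperators


noncomputable def lap {n : ℕ} (f : EuclideanSpace ℝ (Fin n) → ℝ)
    (x : EuclideanSpace ℝ (Fin n)) : ℝ :=
  ∑ i : Fin n, fderiv ℝ (fun y => fderiv ℝ f y (EuclideanSpace.single i 1)) x
    (EuclideanSpace.single i 1)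

noncomputable def M {n : ℕ} (w : Fin n → ℝ) : EuclideanSpace ℝ (Fin n) →L[ℝ] ℝ :=
  ∑ i, w i • (EuclideanSpace.proj i : EuclideanSpace ℝ (Fin n) →L[ℝ] ℝ)

lemma M_apply {n : ℕ} (w : Fin n → ℝ) (j : Fin n) :
    M w (EuclideanSpace.single j 1) = w j := by
  simp [M, ContinuousLinearMap.sum_apply, EuclideanSpace.single_apply]

lemma hasFDerivAt_P {n : ℕ} (b : Fin n → ℝ) (y : EuclideanSpace ℝ (Fin n)) :
    HasFDerivAt (fun z : EuclideanSpace ℝ (Fin n) => ∑ i, b i * z i ^ 2)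
      (M (fun i => 2 * b i * y i)) y := by
  unfold M
  refine HasFDerivAt.fun_sum fun i _ => ?_
  have hproj : HasFDerivAt (fun z : EuclideanSpace ℝ (Fin n) => z i)
      (EuclideanSpace.proj i : EuclideanSpace ℝ (Fin n) →L[ℝ] ℝ) y :=
    (EuclideanSpace.proj (𝕜 := ℝ) i).hasFDerivAt
  have h2 := (hproj.fun_mul hproj).const_mul (b i)
  have : (fun z : EuclideanSpace ℝ (Fin n) => b i * z i ^ 2)
      = fun z => b i * (z i * z i) := by funext z; ring
  rw [this]
  refine h2.congr_fderiv ?_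
  refine ContinuousLinearMap.ext fun z => ?_
  simp
  ring

lemma hasFDerivAt_sqrtP {n : ℕ} (b : Fin n → ℝ) (y : EuclideanSpace ℝ (Fin n))
    (hy : 0 < ∑ i, b i * y i ^ 2) :
    HasFDerivAt (fun z : EuclideanSpace ℝ (Fin n) => Real.sqrt (∑ i, b i * z i ^ 2))
      ((1 / (2 * Real.sqrt (∑ i, b i * y i ^ 2))) • M (fun i => 2 * b i * y i)) y :=
  (hasFDerivAt_P b y).sqrt hy.ne'

lemma hasFDerivAt_invpow {n : ℕ} (b : Fin n → ℝ) (y : EuclideanSpace ℝ (Fin n))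
    (hy : 0 < ∑ i, b i * y i ^ 2) (m : ℕ) :
    HasFDerivAt (fun z : EuclideanSpace ℝ (Fin n) => (Real.sqrt (∑ i, b i * z i ^ 2) ^ (m+1))⁻¹)
      ((-((m:ℝ)+1) / (2 * Real.sqrt (∑ i, b i * y i ^ 2) ^ (m+3))) • M (fun i => 2 * b i * y i))
      y := by
  have hρ := hasFDerivAt_sqrtP b y hy
  have hρpos : 0 < Real.sqrt (∑ i, b i * y i ^ 2) := Real.sqrt_pos.2 hy
  have hpow := (hasDerivAt_pow (m+1) (Real.sqrt (∑ i, b i * y i ^ 2))).inv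
    (pow_ne_zero _ hρpos.ne')
  have h := hpow.comp_hasFDerivAt y hρ
  have hfun : ((fun t : ℝ => (t ^ (m+1))⁻¹) ∘ fun z : EuclideanSpace ℝ (Fin n) =>
      Real.sqrt (∑ i, b i * z i ^ 2))
      = fun z => (Real.sqrt (∑ i, b i * z i ^ 2) ^ (m+1))⁻¹ := rfl
  rw [show ((fun x : ℝ => x ^ (m+1))⁻¹ ∘ fun z : EuclideanSpace ℝ (Fin n) =>
      Real.sqrt (∑ i, b i * z i ^ 2)) = fun z => (Real.sqrt (∑ i, b i * z i ^ 2) ^ (m+1))⁻¹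
      from rfl] at h
  refine h.congr_fderiv ?_
  rw [smul_smul]
  congr 1
  have h1 : Real.sqrt (∑ i, b i * y i ^ 2) ≠ 0 := hρpos.ne'
  simp only [Nat.add_sub_cancel]
  push_cast
  field_simp
  ring

lemma hasFDerivAt_inv1 {n : ℕ} (b : Fin n → ℝ) (y : EuclideanSpace ℝ (Fin n))
    (hy : 0 < ∑ i, b i * y i ^ 2) :
    HasFDerivAt (fun z : EuclideanSpace ℝ (Fin n) => (Real.sqrt (∑ i, b i * z i ^ 2))⁻¹)
      ((-1 / (2 * Real.sqrt (∑ i, b i * y i ^ 2) ^ 3)) • M (fun i => 2 * b i * y i)) y := by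
  have h := hasFDerivAt_invpow b y hy 0
  norm_num at h
  exact h

lemma hasFDerivAt_inv3 {n : ℕ} (b : Fin n → ℝ) (y : EuclideanSpace ℝ (Fin n))
    (hy : 0 < ∑ i, b i * y i ^ 2) :
    HasFDerivAt (fun z : EuclideanSpace ℝ (Fin n) => (Real.sqrt (∑ i, b i * z i ^ 2) ^ 3)⁻¹)
      ((-3 / (2 * Real.sqrt (∑ i, b i * y i ^ 2) ^ 5)) • M (fun i => 2 * b i * y i)) y := by
  have h := hasFDerivAt_invpow b y hy 2
  norm_num at h
  exact h

lemma hasFDerivAt_inv5 {n : ℕ} (b : Fin n → ℝ) (y : EuclideanSpace ℝ (Fin n))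
    (hy : 0 < ∑ i, b i * y i ^ 2) :
    HasFDerivAt (fun z : EuclideanSpace ℝ (Fin n) => (Real.sqrt (∑ i, b i * z i ^ 2) ^ 5)⁻¹)
      ((-5 / (2 * Real.sqrt (∑ i, b i * y i ^ 2) ^ 7)) • M (fun i => 2 * b i * y i)) y := by
  have h := hasFDerivAt_invpow b y hy 4
  norm_num at h
  exact h

lemma hasFDerivAt_P2 {n : ℕ} (a : Fin n → ℝ) (y : EuclideanSpace ℝ (Fin n)) :
    HasFDerivAt (fun z : EuclideanSpace ℝ (Fin n) => ∑ i, a i ^ 2 * z i ^ 2)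
      (M (fun i => 2 * a i ^ 2 * y i)) y := hasFDerivAt_P (fun i => a i ^ 2) y

lemma Qcont {n : ℕ} (a : Fin n → ℝ) :
    Continuous (fun z : EuclideanSpace ℝ (Fin n) => ∑ i, a i * z i ^ 2) :=
  continuous_iff_continuousAt.2 fun z => (hasFDerivAt_P a z).continuousAt

lemma Uopen {n : ℕ} (a : Fin n → ℝ) :
    IsOpen {z : EuclideanSpace ℝ (Fin n) | 0 < ∑ i, a i * z i ^ 2} :=
  isOpen_lt continuous_const (Qcont a)

lemma lapF_eq {n : ℕ} (a : Fin n → ℝ) (y : EuclideanSpace ℝ (Fin n))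
    (hy : 0 < ∑ i, a i * y i ^ 2) :
    lap (fun w : EuclideanSpace ℝ (Fin n) => Real.sqrt (∑ i, a i * w i ^ 2)) y
      = (∑ i, a i) * (Real.sqrt (∑ i, a i * y i ^ 2))⁻¹
        - (∑ i, a i ^ 2 * y i ^ 2) * (Real.sqrt (∑ i, a i * y i ^ 2) ^ 3)⁻¹ := by
  have hρy : Real.sqrt (∑ i, a i * y i ^ 2) ≠ 0 := (Real.sqrt_pos.2 hy).ne'
  have hterm : ∀ i : Fin n,
      fderiv ℝ (fun z => fderiv ℝ
          (fun w : EuclideanSpace ℝ (Fin n) => Real.sqrt (∑ i, a i * w i ^ 2)) z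
          (EuclideanSpace.single i 1)) y (EuclideanSpace.single i 1)
        = a i * (Real.sqrt (∑ i, a i * y i ^ 2))⁻¹
          - a i ^ 2 * y i ^ 2 * (Real.sqrt (∑ i, a i * y i ^ 2) ^ 3)⁻¹ := by
    intro i
    have hev : (fun z => fderiv ℝ
          (fun w : EuclideanSpace ℝ (Fin n) => Real.sqrt (∑ i, a i * w i ^ 2)) z
          (EuclideanSpace.single i 1))
        =ᶠ[nhds y] (fun z => (a i * z i) * (Real.sqrt (∑ i, a i * z i ^ 2))⁻¹) := by
      filter_upwards [(Uopen a).mem_nhds hy] with z hz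
      rw [(hasFDerivAt_sqrtP a z hz).fderiv]
      rw [ContinuousLinearMap.smul_apply, M_apply]
      have hρz : Real.sqrt (∑ i, a i * z i ^ 2) ≠ 0 := (Real.sqrt_pos.2 hz).ne'
      field_simp
      linear_combination (a i * z i) * mul_inv_cancel₀ hρz
    rw [hev.fderiv_eq]
    have hproj : HasFDerivAt (fun z : EuclideanSpace ℝ (Fin n) => z i)
        (EuclideanSpace.proj i : EuclideanSpace ℝ (Fin n) →L[ℝ] ℝ) y :=
      (EuclideanSpace.proj (𝕜 := ℝ) i).hasFDerivAt
    have hd := (hproj.const_mul (a i)).fun_mul (hasFDerivAt_inv1 a y hy)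
    rw [hd.fderiv]
    simp only [ContinuousLinearMap.add_apply, ContinuousLinearMap.smul_apply, M_apply,
      ContinuousLinearMap.coe_smul', Pi.smul_apply, PiLp.proj_apply,
      EuclideanSpace.single_apply, if_pos rfl, ↓reduceIte, smul_eq_mul]
    field_simp
    ring
  have hlap : lap (fun w : EuclideanSpace ℝ (Fin n) => Real.sqrt (∑ i, a i * w i ^ 2)) y
      = ∑ i, fderiv ℝ (fun z => fderiv ℝ
          (fun w : EuclideanSpace ℝ (Fin n) => Real.sqrt (∑ i, a i * w i ^ 2)) z
          (EuclideanSpace.single i 1)) y (EuclideanSpace.single i 1) := rfl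
  rw [hlap, Finset.sum_congr rfl fun i _ => hterm i, Finset.sum_sub_distrib,
    ← Finset.sum_mul, ← Finset.sum_mul]

theorem bilap_eq {n : ℕ} (a : Fin n → ℝ) (x : EuclideanSpace ℝ (Fin n))
    (hx : 0 < ∑ i, a i * x i ^ 2) :
    lap (lap (fun w : EuclideanSpace ℝ (Fin n) => Real.sqrt (∑ i, a i * w i ^ 2))) x
      = -((∑ i, a i) ^ 2 + 2 * ∑ i, a i ^ 2) * (Real.sqrt (∑ i, a i * x i ^ 2) ^ 3)⁻¹
        + (6 * (∑ i, a i) * (∑ i, a i ^ 2 * x i ^ 2) + 12 * ∑ i, a i ^ 3 * x i ^ 2)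
            * (Real.sqrt (∑ i, a i * x i ^ 2) ^ 5)⁻¹
        - 15 * (∑ i, a i ^ 2 * x i ^ 2) ^ 2 * (Real.sqrt (∑ i, a i * x i ^ 2) ^ 7)⁻¹ := by
  have hρx : Real.sqrt (∑ i, a i * x i ^ 2) ≠ 0 := (Real.sqrt_pos.2 hx).ne'
  have hterm : ∀ j : Fin n,
      fderiv ℝ (fun z => fderiv ℝ
          (lap (fun w : EuclideanSpace ℝ (Fin n) => Real.sqrt (∑ i, a i * w i ^ 2))) z
          (EuclideanSpace.single j 1)) x (EuclideanSpace.single j 1)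
        = -((∑ i, a i) * a j + 2 * a j ^ 2) * (Real.sqrt (∑ i, a i * x i ^ 2) ^ 3)⁻¹
          + (3 * (∑ i, a i) * a j ^ 2 * x j ^ 2 + 12 * a j ^ 3 * x j ^ 2
              + 3 * a j * (∑ i, a i ^ 2 * x i ^ 2)) * (Real.sqrt (∑ i, a i * x i ^ 2) ^ 5)⁻¹
          - 15 * a j ^ 2 * x j ^ 2 * (∑ i, a i ^ 2 * x i ^ 2)
              * (Real.sqrt (∑ i, a i * x i ^ 2) ^ 7)⁻¹ := by
    intro j
    have hev : (fun z => fderiv ℝ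
          (lap (fun w : EuclideanSpace ℝ (Fin n) => Real.sqrt (∑ i, a i * w i ^ 2))) z
          (EuclideanSpace.single j 1))
        =ᶠ[nhds x] (fun z =>
          ((-((∑ i, a i) + 2 * a j)) * (a j * z j)) * (Real.sqrt (∑ i, a i * z i ^ 2) ^ 3)⁻¹
          + (3 * (a j * z j)) * ((∑ i, a i ^ 2 * z i ^ 2)
              * (Real.sqrt (∑ i, a i * z i ^ 2) ^ 5)⁻¹)) := by
      filter_upwards [(Uopen a).mem_nhds hx] with z hz
      have hev2 : (lap (fun w : EuclideanSpace ℝ (Fin n) => Real.sqrt (∑ i, a i * w i ^ 2)))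
          =ᶠ[nhds z] (fun w => (∑ i, a i) * (Real.sqrt (∑ i, a i * w i ^ 2))⁻¹
            - (∑ i, a i ^ 2 * w i ^ 2) * (Real.sqrt (∑ i, a i * w i ^ 2) ^ 3)⁻¹) := by
        filter_upwards [(Uopen a).mem_nhds hz] with w hw
        exact lapF_eq a w hw
      rw [hev2.fderiv_eq]
      have hd := ((hasFDerivAt_inv1 a z hz).const_mul (∑ i, a i)).fun_sub
        ((hasFDerivAt_P2 a z).fun_mul (hasFDerivAt_inv3 a z hz))
      rw [hd.fderiv]
      have hρz : Real.sqrt (∑ i, a i * z i ^ 2) ≠ 0 := (Real.sqrt_pos.2 hz).ne'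
      simp only [ContinuousLinearMap.sub_apply, ContinuousLinearMap.add_apply,
        ContinuousLinearMap.smul_apply, M_apply, smul_eq_mul]
      field_simp
      ring
    rw [hev.fderiv_eq]
    have hproj : HasFDerivAt (fun z : EuclideanSpace ℝ (Fin n) => z j)
        (EuclideanSpace.proj j : EuclideanSpace ℝ (Fin n) →L[ℝ] ℝ) x :=
      (EuclideanSpace.proj (𝕜 := ℝ) j).hasFDerivAt
    have hd2 := (((hproj.const_mul (a j)).const_mul (-((∑ i, a i) + 2 * a j))).fun_mul
        (hasFDerivAt_inv3 a x hx)).fun_add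
      (((hproj.const_mul (a j)).const_mul 3).fun_mul
        ((hasFDerivAt_P2 a x).fun_mul (hasFDerivAt_inv5 a x hx)))
    rw [hd2.fderiv]
    simp only [ContinuousLinearMap.add_apply, ContinuousLinearMap.smul_apply,
      ContinuousLinearMap.coe_smul', Pi.smul_apply, M_apply, PiLp.proj_apply,
      EuclideanSpace.single_apply, if_pos rfl, ↓reduceIte, smul_eq_mul, mul_one]
    field_simp
    ring
  have hlap2 : lap (lap (fun w : EuclideanSpace ℝ (Fin n) =>
        Real.sqrt (∑ i, a i * w i ^ 2))) x
      = ∑ j, fderiv ℝ (fun z => fderiv ℝ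
          (lap (fun w : EuclideanSpace ℝ (Fin n) => Real.sqrt (∑ i, a i * w i ^ 2))) z
          (EuclideanSpace.single j 1)) x (EuclideanSpace.single j 1) := rfl
  rw [hlap2, Finset.sum_congr rfl fun j _ => hterm j]
  have g1 : ∑ j, -((∑ i, a i) * a j + 2 * a j ^ 2)
      = -((∑ i, a i) ^ 2 + 2 * ∑ i, a i ^ 2) := by
    calc ∑ j, -((∑ i, a i) * a j + 2 * a j ^ 2)
        = ∑ j, ((-(∑ i, a i)) * a j + (-2) * a j ^ 2) :=
          Finset.sum_congr rfl fun j _ => by ring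
      _ = (-(∑ i, a i)) * (∑ j, a j) + (-2) * ∑ j, a j ^ 2 := by
          rw [Finset.sum_add_distrib, ← Finset.mul_sum, ← Finset.mul_sum]
      _ = -((∑ i, a i) ^ 2 + 2 * ∑ i, a i ^ 2) := by ring
  have g2 : ∑ j, (3 * (∑ i, a i) * a j ^ 2 * x j ^ 2 + 12 * a j ^ 3 * x j ^ 2
        + 3 * a j * (∑ i, a i ^ 2 * x i ^ 2))
      = 6 * (∑ i, a i) * (∑ i, a i ^ 2 * x i ^ 2) + 12 * ∑ i, a i ^ 3 * x i ^ 2 := by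
    calc ∑ j, (3 * (∑ i, a i) * a j ^ 2 * x j ^ 2 + 12 * a j ^ 3 * x j ^ 2
          + 3 * a j * (∑ i, a i ^ 2 * x i ^ 2))
        = ∑ j, ((3 * (∑ i, a i)) * (a j ^ 2 * x j ^ 2) + (12 : ℝ) * (a j ^ 3 * x j ^ 2)
            + (3 * (∑ i, a i ^ 2 * x i ^ 2)) * a j) :=
          Finset.sum_congr rfl fun j _ => by ring
      _ = (3 * (∑ i, a i)) * (∑ j, a j ^ 2 * x j ^ 2) + (12 : ℝ) * (∑ j, a j ^ 3 * x j ^ 2)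
            + (3 * (∑ i, a i ^ 2 * x i ^ 2)) * (∑ j, a j) := by
          rw [Finset.sum_add_distrib, Finset.sum_add_distrib, ← Finset.mul_sum,
            ← Finset.mul_sum, ← Finset.mul_sum]
      _ = 6 * (∑ i, a i) * (∑ i, a i ^ 2 * x i ^ 2) + 12 * ∑ i, a i ^ 3 * x i ^ 2 := by ring
  have g3 : ∑ j, 15 * a j ^ 2 * x j ^ 2 * (∑ i, a i ^ 2 * x i ^ 2)
      = 15 * (∑ i, a i ^ 2 * x i ^ 2) ^ 2 := by
    calc ∑ j, 15 * a j ^ 2 * x j ^ 2 * (∑ i, a i ^ 2 * x i ^ 2)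
        = ∑ j, (15 * (∑ i, a i ^ 2 * x i ^ 2)) * (a j ^ 2 * x j ^ 2) :=
          Finset.sum_congr rfl fun j _ => by ring
      _ = (15 * (∑ i, a i ^ 2 * x i ^ 2)) * ∑ j, (a j ^ 2 * x j ^ 2) := by
          rw [← Finset.mul_sum]
      _ = 15 * (∑ i, a i ^ 2 * x i ^ 2) ^ 2 := by ring
  rw [Finset.sum_sub_distrib, Finset.sum_add_distrib, ← Finset.sum_mul, ← Finset.sum_mul,
    ← Finset.sum_mul, g1, g2, g3]

lemma inv_pow_identity (r : ℝ) (hr : r ≠ 0) (C1 C2 C3 : ℝ) :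
    C1 * (r ^ 3)⁻¹ + C2 * (r ^ 5)⁻¹ - C3 * (r ^ 7)⁻¹
      = (C1 * (r ^ 2) ^ 2 + C2 * r ^ 2 - C3) * (r ^ 7)⁻¹ := by
  field_simp

theorem aux_nonpos {n : ℕ} (a : Fin n → ℝ) (x : EuclideanSpace ℝ (Fin n))
    (hQx : 0 < ∑ i, a i * x i ^ 2)
    (h : -((∑ i, a i) ^ 2 + 2 * ∑ i, a i ^ 2) * (Real.sqrt (∑ i, a i * x i ^ 2) ^ 3)⁻¹
        + (6 * (∑ i, a i) * (∑ i, a i ^ 2 * x i ^ 2) + 12 * ∑ i, a i ^ 3 * x i ^ 2)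
            * (Real.sqrt (∑ i, a i * x i ^ 2) ^ 5)⁻¹
        - 15 * (∑ i, a i ^ 2 * x i ^ 2) ^ 2 * (Real.sqrt (∑ i, a i * x i ^ 2) ^ 7)⁻¹ ≤ 0) :
    lap (lap (fun w : EuclideanSpace ℝ (Fin n) => Real.sqrt (∑ i, a i * w i ^ 2))) x ≤ 0 := by
  rw [bilap_eq a x hQx]; exact h

set_option maxHeartbeats 1000000 in
/-- For `n ≥ 3`, `k = 2` and `1/n + sqrt(2(n−2)(n−1))/(n(n−2)) ≤ ε ≤ 1`, the bilaplacian of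
`ρ(x) = sqrt(x₁² + x₂² + ε(x₃² + ⋯ + x_n²))` is nonpositive away from the origin. -/
theorem bilaplacian_nonpos_k_eq_two (n : ℕ) (hn : 3 ≤ n) (ε : ℝ)
    (hε₁ : 1 / (n : ℝ) + Real.sqrt (2 * ((n : ℝ) - 2) * ((n : ℝ) - 1)) / ((n : ℝ) * ((n : ℝ) - 2)) ≤ ε)
    (hε₂ : ε ≤ 1)
    (x : EuclideanSpace ℝ (Fin n)) (hx : x ≠ 0) :
    lap (lap (fun y : EuclideanSpace ℝ (Fin n) =>
      Real.sqrt (∑ i : Fin n, (if (i : ℕ) < 2 then (1 : ℝ) else ε) * y i ^ 2))) x ≤ 0 := by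
  have hn3 : (3 : ℝ) ≤ (n : ℝ) := by exact_mod_cast hn
  have hn0 : (0 : ℝ) < (n : ℝ) := by linarith
  have hn2 : (0 : ℝ) < (n : ℝ) - 2 := by linarith
  have hc0 : 0 ≤ Real.sqrt (2 * ((n : ℝ) - 2) * ((n : ℝ) - 1)) := Real.sqrt_nonneg _
  have hc2 : Real.sqrt (2 * ((n : ℝ) - 2) * ((n : ℝ) - 1)) ^ 2
      = 2 * ((n : ℝ) - 2) * ((n : ℝ) - 1) := Real.sq_sqrt (by nlinarith)
  have hε0 : 0 < ε := by
    have h1 : 0 ≤ Real.sqrt (2 * ((n : ℝ) - 2) * ((n : ℝ) - 1)) / ((n : ℝ) * ((n : ℝ) - 2)) :=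
      div_nonneg hc0 (by nlinarith)
    have h2 : 0 < 1 / (n : ℝ) := by positivity
    linarith
  -- the splitting of sums
  have hs : 0 ≤ ∑ i : Fin n, (if (i : ℕ) < 2 then x i ^ 2 else 0) :=
    Finset.sum_nonneg fun i _ => by split_ifs <;> positivity
  have ht : 0 ≤ ∑ i : Fin n, (if (i : ℕ) < 2 then 0 else x i ^ 2) :=
    Finset.sum_nonneg fun i _ => by split_ifs <;> positivity
  set s := ∑ i : Fin n, (if (i : ℕ) < 2 then x i ^ 2 else 0) with hs_def
  set t := ∑ i : Fin n, (if (i : ℕ) < 2 then 0 else x i ^ 2) with ht_def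
  have hst : 0 < s + t := by
    have hxi : ∃ i, x i ≠ 0 := by
      by_contra h
      push_neg at h
      exact hx (by ext i; simpa using h i)
    obtain ⟨i, hi⟩ := hxi
    have h1 : s + t = ∑ i : Fin n, x i ^ 2 := by
      rw [hs_def, ht_def, ← Finset.sum_add_distrib]
      exact Finset.sum_congr rfl fun i _ => by split_ifs <;> ring
    have h2 : x i ^ 2 ≤ ∑ j : Fin n, x j ^ 2 :=
      Finset.single_le_sum (f := fun j => x j ^ 2) (fun j _ => sq_nonneg _) (Finset.mem_univ i)
    have h3 : 0 < x i ^ 2 := by positivity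
    rw [h1]; linarith
  have hsplit : ∀ c d : ℝ,
      (∑ i : Fin n, (if (i : ℕ) < 2 then c else d) * x i ^ 2) = c * s + d * t := by
    intro c d
    rw [hs_def, ht_def, Finset.mul_sum, Finset.mul_sum, ← Finset.sum_add_distrib]
    exact Finset.sum_congr rfl fun i _ => by split_ifs <;> ring
  have hp : (∑ i : Fin n, (if (i : ℕ) < 2 then (1 : ℝ) else 0)) = 2 := by
    rw [Fin.sum_univ_eq_sum_range (fun i => if i < 2 then (1 : ℝ) else 0) n]
    rw [Finset.sum_congr rfl (fun i _ => show (if i < 2 then (1 : ℝ) else 0)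
      = if i ∈ Finset.range 2 then 1 else 0 by simp [Finset.mem_range])]
    rw [Finset.sum_ite_mem]
    rw [Finset.inter_eq_right.2 (Finset.range_subset_range.2 (by omega))]
    simp
  have hone : ∀ c d : ℝ,
      (∑ i : Fin n, (if (i : ℕ) < 2 then c else d)) = 2 * c + ((n : ℝ) - 2) * d := by
    intro c d
    have h1 : ∀ i : Fin n, (if (i : ℕ) < 2 then c else d)
        = (c - d) * (if (i : ℕ) < 2 then (1 : ℝ) else 0) + d := fun i => by
      split_ifs <;> ring
    calc (∑ i : Fin n, (if (i : ℕ) < 2 then c else d))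
        = ∑ i : Fin n, ((c - d) * (if (i : ℕ) < 2 then (1 : ℝ) else 0) + d) :=
          Finset.sum_congr rfl fun i _ => h1 i
      _ = (c - d) * (∑ i : Fin n, (if (i : ℕ) < 2 then (1 : ℝ) else 0)) + (n : ℕ) • d := by
          rw [Finset.sum_add_distrib, ← Finset.mul_sum, Finset.sum_const, Finset.card_univ,
            Fintype.card_fin]
      _ = 2 * c + ((n : ℝ) - 2) * d := by rw [hp, nsmul_eq_mul]; ring
  have hQx : 0 < ∑ i : Fin n, (if (i : ℕ) < 2 then (1 : ℝ) else ε) * x i ^ 2 := by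
    rw [hsplit 1 ε]
    rcases eq_or_lt_of_le hs with h | h
    · have ht' : 0 < t := by linarith
      nlinarith [mul_pos hε0 ht']
    · nlinarith [mul_nonneg hε0.le ht]
  have hT : (∑ i : Fin n, (if (i : ℕ) < 2 then (1 : ℝ) else ε)) = 2 + ((n : ℝ) - 2) * ε := by
    rw [hone 1 ε]; ring
  have hT2 : (∑ i : Fin n, (if (i : ℕ) < 2 then (1 : ℝ) else ε) ^ 2)
      = 2 + ((n : ℝ) - 2) * ε ^ 2 := by
    calc (∑ i : Fin n, (if (i : ℕ) < 2 then (1 : ℝ) else ε) ^ 2)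
        = ∑ i : Fin n, (if (i : ℕ) < 2 then (1 : ℝ) else ε ^ 2) :=
          Finset.sum_congr rfl fun i _ => by split_ifs <;> ring
      _ = 2 * 1 + ((n : ℝ) - 2) * ε ^ 2 := hone 1 (ε ^ 2)
      _ = 2 + ((n : ℝ) - 2) * ε ^ 2 := by ring
  have hS : (∑ i : Fin n, (if (i : ℕ) < 2 then (1 : ℝ) else ε) ^ 2 * x i ^ 2)
      = s + ε ^ 2 * t := by
    calc (∑ i : Fin n, (if (i : ℕ) < 2 then (1 : ℝ) else ε) ^ 2 * x i ^ 2)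
        = ∑ i : Fin n, (if (i : ℕ) < 2 then (1 : ℝ) else ε ^ 2) * x i ^ 2 :=
          Finset.sum_congr rfl fun i _ => by split_ifs <;> ring
      _ = 1 * s + ε ^ 2 * t := hsplit 1 (ε ^ 2)
      _ = s + ε ^ 2 * t := by ring
  have hU : (∑ i : Fin n, (if (i : ℕ) < 2 then (1 : ℝ) else ε) ^ 3 * x i ^ 2)
      = s + ε ^ 3 * t := by
    calc (∑ i : Fin n, (if (i : ℕ) < 2 then (1 : ℝ) else ε) ^ 3 * x i ^ 2)
        = ∑ i : Fin n, (if (i : ℕ) < 2 then (1 : ℝ) else ε ^ 3) * x i ^ 2 :=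
          Finset.sum_congr rfl fun i _ => by split_ifs <;> ring
      _ = 1 * s + ε ^ 3 * t := hsplit 1 (ε ^ 3)
      _ = s + ε ^ 3 * t := by ring
  -- positivity data
  have hspos : 0 < s + ε * t := by
    have h := hQx; rw [hsplit 1 ε] at h; linarith
  have hρpos : 0 < Real.sqrt (∑ i : Fin n, (if (i : ℕ) < 2 then (1 : ℝ) else ε) * x i ^ 2) :=
    Real.sqrt_pos.2 hQx
  have hρne := hρpos.ne'
  have e2 : Real.sqrt (∑ i : Fin n, (if (i : ℕ) < 2 then (1 : ℝ) else ε) * x i ^ 2) ^ 2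
      = s + ε * t := by
    rw [Real.sq_sqrt hQx.le, hsplit 1 ε]; ring
  have e4 : Real.sqrt (∑ i : Fin n, (if (i : ℕ) < 2 then (1 : ℝ) else ε) * x i ^ 2) ^ 4
      = (s + ε * t) ^ 2 := by rw [← e2]; ring
  -- sign facts A, B, C
  have hc1 : ((n : ℝ) - 2) + Real.sqrt (2 * ((n : ℝ) - 2) * ((n : ℝ) - 1))
      ≤ (n : ℝ) * ((n : ℝ) - 2) * ε := by
    have hd : (0 : ℝ) < (n : ℝ) * ((n : ℝ) - 2) := by positivity
    have h := mul_le_mul_of_nonneg_left hε₁ hd.le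
    have e1 : (n : ℝ) * ((n : ℝ) - 2) * (1 / (n : ℝ)
        + Real.sqrt (2 * ((n : ℝ) - 2) * ((n : ℝ) - 1)) / ((n : ℝ) * ((n : ℝ) - 2)))
        = ((n : ℝ) - 2) + Real.sqrt (2 * ((n : ℝ) - 2) * ((n : ℝ) - 1)) := by
      field_simp
    rw [e1] at h
    exact h
  have hA : -(n : ℝ) * ((n : ℝ) - 2) * ε ^ 2 + 2 * ((n : ℝ) - 2) * ε + 1 ≤ 0 := by
    have hw1 : 0 ≤ (n : ℝ) * ((n : ℝ) - 2) * ε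
        - (((n : ℝ) - 2) + Real.sqrt (2 * ((n : ℝ) - 2) * ((n : ℝ) - 1))) := by linarith
    have hw2 : 0 ≤ (n : ℝ) * ((n : ℝ) - 2) * ε - ((n : ℝ) - 2)
        + Real.sqrt (2 * ((n : ℝ) - 2) * ((n : ℝ) - 1)) := by linarith
    have hprod := mul_nonneg hw1 hw2
    nlinarith [hprod, hc2, mul_pos hn0 hn2]
  have hεn : 1 ≤ (n : ℝ) * ε := by
    have h1 : 1 / (n : ℝ) ≤ ε := by
      have : 0 ≤ Real.sqrt (2 * ((n : ℝ) - 2) * ((n : ℝ) - 1)) / ((n : ℝ) * ((n : ℝ) - 2)) :=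
        div_nonneg hc0 (by positivity)
      linarith
    rw [div_le_iff₀ hn0] at h1
    linarith [h1]
  have hB : 6 * ε * ((n : ℝ) * ε ^ 2 - ((n : ℝ) + 1) * ε + 1) ≤ 0 := by
    have h1 : 0 ≤ (n : ℝ) * ε - 1 := by linarith
    have h2 : 0 ≤ 1 - ε := by linarith
    nlinarith [mul_nonneg hε0.le (mul_nonneg h1 h2)]
  have hC : -15 * ε ^ 2 * (ε - 1) ^ 2 ≤ 0 := by nlinarith [sq_nonneg (ε * (ε - 1))]
  -- the final inequality
  have hR : -((2 + ((n : ℝ) - 2) * ε) ^ 2 + 2 * (2 + ((n : ℝ) - 2) * ε ^ 2)) * (s + ε * t) ^ 2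
      + (6 * (2 + ((n : ℝ) - 2) * ε) * (s + ε ^ 2 * t) + 12 * (s + ε ^ 3 * t)) * (s + ε * t)
      - 15 * (s + ε ^ 2 * t) ^ 2 ≤ 0 := by
    have p1 : (-(n : ℝ) * ((n : ℝ) - 2) * ε ^ 2 + 2 * ((n : ℝ) - 2) * ε + 1) * (s + ε * t) ^ 2
        ≤ 0 := mul_nonpos_iff.2 (Or.inr ⟨hA, sq_nonneg _⟩)
    have p2 : (6 * ε * ((n : ℝ) * ε ^ 2 - ((n : ℝ) + 1) * ε + 1)) * t * (s + ε * t) ≤ 0 := by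
      have h1 : (6 * ε * ((n : ℝ) * ε ^ 2 - ((n : ℝ) + 1) * ε + 1)) * t ≤ 0 :=
        mul_nonpos_iff.2 (Or.inr ⟨hB, ht⟩)
      exact mul_nonpos_iff.2 (Or.inr ⟨h1, hspos.le⟩)
    have p3 : (-15 * ε ^ 2 * (ε - 1) ^ 2) * t ^ 2 ≤ 0 :=
      mul_nonpos_iff.2 (Or.inr ⟨hC, sq_nonneg _⟩)
    nlinarith [p1, p2, p3]
  have hbig : -((∑ i : Fin n, (if (i : ℕ) < 2 then (1 : ℝ) else ε)) ^ 2
        + 2 * ∑ i : Fin n, (if (i : ℕ) < 2 then (1 : ℝ) else ε) ^ 2)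
        * (Real.sqrt (∑ i : Fin n, (if (i : ℕ) < 2 then (1 : ℝ) else ε) * x i ^ 2) ^ 3)⁻¹
      + (6 * (∑ i : Fin n, (if (i : ℕ) < 2 then (1 : ℝ) else ε))
          * (∑ i : Fin n, (if (i : ℕ) < 2 then (1 : ℝ) else ε) ^ 2 * x i ^ 2)
          + 12 * ∑ i : Fin n, (if (i : ℕ) < 2 then (1 : ℝ) else ε) ^ 3 * x i ^ 2)
          * (Real.sqrt (∑ i : Fin n, (if (i : ℕ) < 2 then (1 : ℝ) else ε) * x i ^ 2) ^ 5)⁻¹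
      - 15 * (∑ i : Fin n, (if (i : ℕ) < 2 then (1 : ℝ) else ε) ^ 2 * x i ^ 2) ^ 2
          * (Real.sqrt (∑ i : Fin n, (if (i : ℕ) < 2 then (1 : ℝ) else ε) * x i ^ 2) ^ 7)⁻¹
      ≤ 0 := by
    rw [hT, hT2, hS, hU]
    have heq := inv_pow_identity
      (Real.sqrt (∑ i : Fin n, (if (i : ℕ) < 2 then (1 : ℝ) else ε) * x i ^ 2)) hρne
      (-((2 + ((n : ℝ) - 2) * ε) ^ 2 + 2 * (2 + ((n : ℝ) - 2) * ε ^ 2)))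
      (6 * (2 + ((n : ℝ) - 2) * ε) * (s + ε ^ 2 * t) + 12 * (s + ε ^ 3 * t))
      (15 * (s + ε ^ 2 * t) ^ 2)
    rw [e2] at heq
    rw [heq]
    exact mul_nonpos_iff.2 (Or.inr ⟨hR, inv_nonneg.2 (by positivity)⟩)
  exact aux_nonpos (fun i => if (i : ℕ) < 2 then (1 : ℝ) else ε) x hQx hbig
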